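/- Let f_1, f_2 ∈ n RI^fin_A. Then the composite f_2 ∘ f_1, restricted to its natural domain f_1⁻¹(Dom(f_2) ∩ Im(f_1)), again belongs to n RI^fin_A, with domC(f_2 ∘ f_1) = f_1⁻¹(P_2 ∨ Q_1) and imC(f_2 ∘ f_1) = f_2(P_2 ∨ Q_1) where P_2 = domC(f_2), Q_1 = imC(f_1), and it satisfies ℓ(f_2 ∘ f_1) ≤ ℓ(f_2) + ℓ(f_1). -/
import Mathlib


namespace BrinThompson

abbrev W (A : Type*) (n : ℕ) : Type _ := Fin n → List A

variable {A : Type*} {n : ℕ}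

/-- Coordinatewise concatenation in `nA*`. -/
def cat (u x : W A n) : W A n := fun i => u i ++ x i

/-- `u ≤_init v` : `u` is an initial factor of `v`. -/
def initLE (u v : W A n) : Prop := ∃ x : W A n, v = cat u x

/-- `w` is the join (least upper bound) of `u` and `v` w.r.t. `≤_init`. -/
def isJoin (u v w : W A n) : Prop :=
  initLE u w ∧ initLE v w ∧ ∀ z : W A n, initLE u z → initLE v z → initLE w z

/-- `u` and `v` have a join. -/
def HasJoin (u v : W A n) : Prop := ∃ w : W A n, isJoin u v w

/-- A joinless code: no two distinct elements have a join. -/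
def JoinlessCode (S : Set (W A n)) : Prop :=
  ∀ u ∈ S, ∀ v ∈ S, u ≠ v → ¬ HasJoin u v

/-- A maximal joinless code: joinless, and every element of `nA*` has a join
with some element of the code. -/
def MaxJoinlessCode (S : Set (W A n)) : Prop :=
  JoinlessCode S ∧ ∀ x : W A n, ∃ p ∈ S, HasJoin x p

/-- The right ideal `C · nA*` generated by `C`. -/
def genIdeal (C : Set (W A n)) : Set (W A n) := {w | ∃ c ∈ C, ∃ x : W A n, w = cat c x}

def IsRightIdeal (R : Set (W A n)) : Prop := genIdeal R = R

/-- An initial factor code: pairwise `≤_init`-incomparable set. -/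
def InitFactorCode (S : Set (W A n)) : Prop :=
  ∀ u ∈ S, ∀ v ∈ S, initLE u v → u = v

/-- `A_{ε,n}`: tuples with one coordinate a single letter and the rest empty. -/
def Aeps (A : Type*) (n : ℕ) : Set (W A n) :=
  {w | ∃ i : Fin n, ∃ a : A, w i = [a] ∧ ∀ j : Fin n, j ≠ i → w j = []}

/-- `(ε)^n`, the tuple of empty strings. -/
def epsn (A : Type*) (n : ℕ) : W A n := fun _ => []

/-- `nA^ω`: `n`-tuples of one-sided infinite sequences over `A`. -/
abbrev Winf (A : Type*) (n : ℕ) : Type _ := Fin n → ℕ → A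

/-- Concatenation of a finite tuple `p ∈ nA*` with an infinite tuple `u ∈ nA^ω`. -/
def catInf (p : W A n) (u : Winf A n) : Winf A n :=
  fun i k => if h : k < (p i).length then (p i).get ⟨k, h⟩ else u i (k - (p i).length)

/-- `v` is an interior vertex of the `P`-dag: a strict initial factor of
some element of `P`. -/
def Interior (P : Set (W A n)) (v : W A n) : Prop := ∃ p ∈ P, initLE v p ∧ v ≠ p

/-- The child of `v` in direction `i`, extended by letter `a`. -/
def child (v : W A n) (i : Fin n) (a : A) : W A n := Function.update v i (v i ++ [a])

/-- A leaf of the interior dag of `P`: an interior vertex none of whose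
children is interior. -/
def InteriorLeaf (P : Set (W A n)) (v : W A n) : Prop :=
  Interior P v ∧ ∀ (i : Fin n) (a : A), ¬ Interior P (child v i a)

/-- `v_+ = (v · A_{ε,n}) ∩ P`, the set of children of `v` belonging to `P`. -/
def vplus (P : Set (W A n)) (v : W A n) : Set (W A n) :=
  {w | (∃ (i : Fin n) (a : A), w = child v i a) ∧ w ∈ P}

/-- The depth of a vertex: the sum of the coordinate lengths. -/
def depth (v : W A n) : ℕ := ∑ i, (v i).length

/-- One-step restriction of `P` at `(p, i)`. -/
def oneStep (P : Set (W A n)) (p : W A n) (i : Fin n) : Set (W A n) :=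
  (P \ {p}) ∪ {w | ∃ a : A, w = child p i a}

/-- One step in a sequence of one-step restrictions. -/
def RestrStep (P Q : Set (W A n)) : Prop := ∃ p ∈ P, ∃ i : Fin n, Q = oneStep P p i

/-- The box code `A^{k_1} × … × A^{k_n}`. -/
def box (A : Type*) {n : ℕ} (k : Fin n → ℕ) : Set (W A n) :=
  {w | ∀ i : Fin n, (w i).length = k i}

/-- Elementwise join `P ∨ Q` of two sets, ranging over the joins that exist. -/
def setJoin (P Q : Set (W A n)) : Set (W A n) :=
  {w | ∃ p ∈ P, ∃ q ∈ Q, isJoin p q w}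

/-- `ℓ(S)`: the maximum coordinate length occurring in `S`. -/
noncomputable def ell (S : Set (W A n)) : ℕ :=
  sSup {m | ∃ z ∈ S, ∃ i : Fin n, (z i).length = m}

/-- An element of `n RI^fin_A`: an injective right ideal morphism of `nA*`
whose domain code and image code are finite maximal joinless codes.
`toFun` is a total function whose values outside `Dom` are irrelevant. -/
structure RIMfin (A : Type*) (n : ℕ) where
  Dom : Set (W A n)
  toFun : W A n → W A n
  domC : Set (W A n)
  imC : Set (W A n)
  ideal : IsRightIdeal Dom
  morph : ∀ x ∈ Dom, ∀ w : W A n, toFun (cat x w) = cat (toFun x) w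
  inj : Set.InjOn toFun Dom
  domC_gen : genIdeal domC = Dom
  imC_gen : genIdeal imC = toFun '' Dom
  domC_fin : domC.Finite
  domC_max : MaxJoinlessCode domC
  imC_fin : imC.Finite
  imC_max : MaxJoinlessCode imC

/-- `ℓ(f) = max{ℓ(z) : z ∈ domC(f) ∪ imC(f)}`. -/
noncomputable def ellF (F : RIMfin A n) : ℕ := ell (F.domC ∪ F.imC)

/-- `G` extends `F` (as partial functions). -/
def Extends (F G : RIMfin A n) : Prop :=
  F.Dom ⊆ G.Dom ∧ ∀ x ∈ F.Dom, G.toFun x = F.toFun x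

/-- `F` and `G` are equal as partial functions. -/
def EquivRIM (F G : RIMfin A n) : Prop :=
  F.Dom = G.Dom ∧ ∀ x ∈ F.Dom, F.toFun x = G.toFun x

/-- `G` is a maximal extension of `F` in `n RI^fin_A`. -/
def MaxExtension (F G : RIMfin A n) : Prop :=
  Extends F G ∧ ∀ H : RIMfin A n, Extends G H → EquivRIM G H



section Aux

lemma cat_assoc (u v w : W A n) : cat (cat u v) w = cat u (cat v w) := by
  funext i; simp [cat]

lemma cat_epsn (u : W A n) : cat u (epsn A n) = u := by
  funext i; simp [cat, epsn]

lemma initLE_iff {u v : W A n} : initLE u v ↔ ∀ i, u i <+: v i := by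
  constructor
  · rintro ⟨x, rfl⟩ i; exact ⟨x i, rfl⟩
  · intro h
    exact ⟨fun i => (v i).drop (u i).length, funext fun i => (List.prefix_iff_eq_append.1 (h i)).symm⟩

lemma initLE_refl (u : W A n) : initLE u u := ⟨epsn A n, (cat_epsn u).symm⟩

lemma initLE_trans {u v w : W A n} (h1 : initLE u v) (h2 : initLE v w) : initLE u w := by
  obtain ⟨x, rfl⟩ := h1; obtain ⟨y, rfl⟩ := h2; exact ⟨cat x y, cat_assoc u x y⟩

lemma initLE_antisymm {u v : W A n} (h1 : initLE u v) (h2 : initLE v u) : u = v := by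
  rw [initLE_iff] at h1 h2
  funext i; exact (h1 i).eq_of_length ((h1 i).length_le.antisymm (h2 i).length_le)

lemma isJoin_ite {u v z : W A n} (hu : initLE u z) (hv : initLE v z) :
    isJoin u v (fun i => if (u i).length ≤ (v i).length then v i else u i) := by
  rw [initLE_iff] at hu hv
  refine ⟨?_, ?_, ?_⟩
  · rw [initLE_iff]; intro i; split
    · exact List.prefix_of_prefix_length_le (hu i) (hv i) (by assumption)
    · exact List.prefix_refl _
  · rw [initLE_iff]; intro i; split
    · exact List.prefix_refl _
    · exact List.prefix_of_prefix_length_le (hv i) (hu i) (by omega)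
  · intro z' hu' hv'
    rw [initLE_iff] at hu' hv' ⊢
    intro i; split
    · exact hv' i
    · exact hu' i

lemma join_of_bounds {u v z : W A n} (hu : initLE u z) (hv : initLE v z) :
    ∃ w, isJoin u v w ∧ initLE w z := by
  refine ⟨_, isJoin_ite hu hv, ?_⟩
  rw [initLE_iff] at hu hv ⊢
  intro i; split
  · exact hv i
  · exact hu i

lemma hasJoin_iff {u v : W A n} : HasJoin u v ↔ ∃ z, initLE u z ∧ initLE v z := by
  constructor
  · rintro ⟨w, h1, h2, _⟩; exact ⟨w, h1, h2⟩
  · rintro ⟨z, h1, h2⟩; obtain ⟨w, hw, _⟩ := join_of_bounds h1 h2; exact ⟨w, hw⟩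

lemma isJoin_unique {u v w w' : W A n} (h : isJoin u v w) (h' : isJoin u v w') : w = w' :=
  initLE_antisymm (h.2.2 w' h'.1 h'.2.1) (h'.2.2 w h.1 h.2.1)

lemma isJoin_coord {u v w : W A n} (h : isJoin u v w) (i : Fin n) : w i = u i ∨ w i = v i := by
  rw [isJoin_unique h (isJoin_ite h.1 h.2.1)]
  dsimp only; split
  · exact Or.inr rfl
  · exact Or.inl rfl

lemma code_le_eq {S : Set (W A n)} (hS : JoinlessCode S) {u v : W A n}
    (hu : u ∈ S) (hv : v ∈ S) (h : initLE u v) : u = v := by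
  by_contra hne
  exact hS u hu v hv hne (hasJoin_iff.2 ⟨v, h, initLE_refl v⟩)

lemma joinless_setJoin {P Q : Set (W A n)} (hP : JoinlessCode P) (hQ : JoinlessCode Q) :
    JoinlessCode (setJoin P Q) := by
  rintro r ⟨p, hp, q, hq, hr⟩ r' ⟨p', hp', q', hq', hr'⟩ hne ⟨z, hz⟩
  have hpz : initLE p z := initLE_trans hr.1 hz.1
  have hp'z : initLE p' z := initLE_trans hr'.1 hz.2.1
  have hqz : initLE q z := initLE_trans hr.2.1 hz.1
  have hq'z : initLE q' z := initLE_trans hr'.2.1 hz.2.1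
  have hpp : p = p' := by
    by_contra hne'
    exact hP p hp p' hp' hne' (hasJoin_iff.2 ⟨z, hpz, hp'z⟩)
  have hqq : q = q' := by
    by_contra hne'
    exact hQ q hq q' hq' hne' (hasJoin_iff.2 ⟨z, hqz, hq'z⟩)
  subst hpp; subst hqq
  exact hne (isJoin_unique hr hr')

lemma setJoin_finite {P Q : Set (W A n)} (hP : P.Finite) (hQ : Q.Finite) :
    (setJoin P Q).Finite := by
  have hsub : setJoin P Q ⊆ ⋃ p ∈ P, ⋃ q ∈ Q, {w | isJoin p q w} := by
    rintro w ⟨p, hp, q, hq, hw⟩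
    simp only [Set.mem_iUnion]
    exact ⟨p, hp, q, hq, hw⟩
  refine Set.Finite.subset ?_ hsub
  refine hP.biUnion fun p _ => hQ.biUnion fun q _ => ?_
  exact Set.Subsingleton.finite (fun w hw w' hw' => isJoin_unique hw hw')

lemma ell_le {S : Set (W A n)} {B : ℕ} (h : ∀ z ∈ S, ∀ i : Fin n, (z i).length ≤ B) :
    ell S ≤ B := by
  apply csSup_le'
  rintro m ⟨z, hz, i, rfl⟩
  exact h z hz i

lemma length_le_ell {S : Set (W A n)} (hS : S.Finite) {z : W A n} (hz : z ∈ S) (i : Fin n) :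
    (z i).length ≤ ell S := by
  apply le_csSup
  · have heq : {m | ∃ z ∈ S, ∃ i : Fin n, (z i).length = m}
        = ⋃ z ∈ S, Set.range (fun i : Fin n => (z i).length) := by
      ext m; simp [Set.mem_iUnion, eq_comm]
    rw [heq]
    exact (hS.biUnion fun z _ => Set.finite_range _).bddAbove
  · exact ⟨z, hz, i, rfl⟩

variable {F : RIMfin A n}

lemma dom_cat {x : W A n} (hx : x ∈ F.Dom) (w : W A n) : cat x w ∈ F.Dom := by
  have h : cat x w ∈ genIdeal F.Dom := ⟨x, hx, w, rfl⟩
  rwa [F.ideal] at h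

lemma domC_subset : F.domC ⊆ F.Dom := fun d hd => by
  rw [← F.domC_gen]; exact ⟨d, hd, epsn A n, (cat_epsn d).symm⟩

lemma mem_dom {x : W A n} (hx : x ∈ F.Dom) : ∃ d ∈ F.domC, ∃ w, x = cat d w := by
  rw [← F.domC_gen] at hx; exact hx

lemma mem_im {z : W A n} (hz : z ∈ F.toFun '' F.Dom) : ∃ c ∈ F.imC, ∃ w, z = cat c w := by
  rw [← F.imC_gen] at hz; exact hz

lemma imC_mem_im {c : W A n} (hc : c ∈ F.imC) : ∃ t ∈ F.Dom, F.toFun t = c := by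
  have h : c ∈ genIdeal F.imC := ⟨c, hc, epsn A n, (cat_epsn c).symm⟩
  rw [F.imC_gen] at h
  obtain ⟨t, ht, heq⟩ := h
  exact ⟨t, ht, heq⟩

lemma map_domC {d : W A n} (hd : d ∈ F.domC) : F.toFun d ∈ F.imC := by
  have hdD : d ∈ F.Dom := domC_subset hd
  obtain ⟨c, hc, v, hv⟩ := mem_im (F := F) ⟨d, hdD, rfl⟩
  obtain ⟨t, ht, htc⟩ := imC_mem_im hc
  obtain ⟨d', hd', u, hu⟩ := mem_dom ht
  have hcv : F.toFun d = F.toFun (cat t v) := by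
    rw [F.morph t ht v, htc, hv]
  have hdtv : d = cat t v := F.inj hdD (dom_cat ht v) hcv
  have hdd' : d = cat d' (cat u v) := by
    rw [hdtv, hu, cat_assoc]
  have : d' = d := code_le_eq F.domC_max.1 hd' hd ⟨cat u v, hdd'⟩
  subst this
  have hv0 : v = epsn A n := by
    funext i
    have := congrFun hdd' i
    simp only [cat, epsn] at this ⊢
    have h0 : (u i ++ v i) = [] := List.append_right_eq_self.1 this.symm
    exact (List.append_eq_nil_iff.1 h0).2
  rw [hv0, cat_epsn] at hv
  rw [hv]; exact hc

lemma imC_surj {c : W A n} (hc : c ∈ F.imC) : ∃ d ∈ F.domC, F.toFun d = c := by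
  obtain ⟨t, ht, htc⟩ := imC_mem_im hc
  obtain ⟨d, hd, u, hu⟩ := mem_dom ht
  have hFd : F.toFun d ∈ F.imC := map_domC hd
  have hct : c = cat (F.toFun d) u := by
    rw [← htc, hu, F.morph d (domC_subset hd) u]
  have heq : F.toFun d = c := code_le_eq F.imC_max.1 hFd hc ⟨u, hct⟩
  exact ⟨d, hd, heq⟩

lemma ellF_bound_domC {d : W A n} (hd : d ∈ F.domC) (i : Fin n) : (d i).length ≤ ellF F :=
  length_le_ell (F.domC_fin.union F.imC_fin) (Or.inl hd) i

lemma ellF_bound_imC {c : W A n} (hc : c ∈ F.imC) (i : Fin n) : (c i).length ≤ ellF F :=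
  length_le_ell (F.domC_fin.union F.imC_fin) (Or.inr hc) i

end Aux

/-- The composite of two elements of `n RI^fin_A`, restricted to its natural
domain, is again in `n RI^fin_A`, with `domC(f₂∘f₁) = f₁⁻¹(P₂ ∨ Q₁)`,
`imC(f₂∘f₁) = f₂(P₂ ∨ Q₁)`, and `ℓ(f₂∘f₁) ≤ ℓ(f₂) + ℓ(f₁)`. -/
theorem composition_in_RIMfin {A : Type*} [Fintype A] [Nonempty A] {n : ℕ}
    (hn : 1 ≤ n) (F₁ F₂ : RIMfin A n) :
    ∃ G : RIMfin A n,
      G.Dom = {x | x ∈ F₁.Dom ∧ F₁.toFun x ∈ F₂.Dom} ∧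
      (∀ x ∈ G.Dom, G.toFun x = F₂.toFun (F₁.toFun x)) ∧
      G.domC = {x | x ∈ F₁.Dom ∧ F₁.toFun x ∈ setJoin F₂.domC F₁.imC} ∧
      G.imC = F₂.toFun '' setJoin F₂.domC F₁.imC ∧
      ellF G ≤ ellF F₂ + ellF F₁ := by
  classical
  set S : Set (W A n) := setJoin F₂.domC F₁.imC with hSdef
  have hSjoinless : JoinlessCode S := joinless_setJoin F₂.domC_max.1 F₁.imC_max.1
  have hSfin : S.Finite := setJoin_finite F₂.domC_fin F₁.imC_fin
  have hSdom₂ : ∀ r ∈ S, r ∈ F₂.Dom := by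
    rintro r ⟨p, hp, q, hq, hr⟩
    obtain ⟨x, hx⟩ := hr.1
    rw [← F₂.domC_gen]
    exact ⟨p, hp, x, hx⟩
  have preS : ∀ r ∈ S, ∃ s, s ∈ F₁.Dom ∧ F₁.toFun s = r ∧
      ∀ i, (s i).length ≤ ellF F₂ + ellF F₁ := by
    rintro r ⟨p, hp, q, hq, hr⟩
    obtain ⟨d, hd, hdq⟩ := imC_surj hq
    obtain ⟨w, hw⟩ := hr.2.1
    refine ⟨cat d w, dom_cat (domC_subset hd) w, ?_, ?_⟩
    · rw [F₁.morph d (domC_subset hd) w, hdq]; exact hw.symm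
    · intro i
      have h1 : (d i).length ≤ ellF F₁ := ellF_bound_domC hd i
      have h3 : (p i).length ≤ ellF F₂ := ellF_bound_domC hp i
      have hri : r i = q i ++ w i := congrFun hw i
      have h2 : (w i).length ≤ (p i).length := by
        rcases isJoin_coord hr i with h | h
        · have h4 := congrArg List.length (hri.symm.trans h)
          simp only [List.length_append] at h4
          omega
        · have h4 := congrArg List.length (hri.symm.trans h)
          simp only [List.length_append] at h4
          omega
      simp only [cat, List.length_append]
      omega
  set DomG : Set (W A n) := {x | x ∈ F₁.Dom ∧ F₁.toFun x ∈ F₂.Dom} with hDomGdef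
  set dC : Set (W A n) := {x | x ∈ F₁.Dom ∧ F₁.toFun x ∈ S} with hdCdef
  set iC : Set (W A n) := F₂.toFun '' S with hiCdef
  set G : W A n → W A n := fun x => F₂.toFun (F₁.toFun x) with hGdef
  have hideal : IsRightIdeal DomG := by
    apply Set.Subset.antisymm
    · rintro y ⟨x, hx, w, rfl⟩
      refine ⟨dom_cat hx.1 w, ?_⟩
      rw [F₁.morph x hx.1 w]
      exact dom_cat hx.2 w
    · intro x hx
      exact ⟨x, hx, epsn A n, (cat_epsn x).symm⟩
  have hdomC_gen : genIdeal dC = DomG := by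
    apply Set.Subset.antisymm
    · rintro y ⟨s, hs, w, rfl⟩
      refine ⟨dom_cat hs.1 w, ?_⟩
      rw [F₁.morph s hs.1 w]
      exact dom_cat (hSdom₂ _ hs.2) w
    · rintro x ⟨hx1, hx2⟩
      obtain ⟨p, hp, a, ha⟩ := mem_dom hx2
      obtain ⟨q, hq, b, hb⟩ := mem_im (F := F₁) ⟨x, hx1, rfl⟩
      obtain ⟨r, hrj, hrle⟩ := join_of_bounds (⟨a, ha⟩ : initLE p _) ⟨b, hb⟩
      have hrS : r ∈ S := ⟨p, hp, q, hq, hrj⟩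
      obtain ⟨s, hs1, hs2, _⟩ := preS r hrS
      obtain ⟨w, hwx⟩ := hrle
      have hfeq : F₁.toFun x = F₁.toFun (cat s w) := by
        rw [F₁.morph s hs1 w, hs2]; exact hwx
      have hx_eq : x = cat s w := F₁.inj hx1 (dom_cat hs1 w) hfeq
      exact ⟨s, ⟨hs1, by rw [hs2]; exact hrS⟩, w, hx_eq⟩
  have himC_gen : genIdeal iC = G '' DomG := by
    apply Set.Subset.antisymm
    · rintro z ⟨c, ⟨r, hrS, rfl⟩, w, rfl⟩
      obtain ⟨s, hs1, hs2, _⟩ := preS r hrS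
      refine ⟨cat s w, ⟨dom_cat hs1 w, ?_⟩, ?_⟩
      · rw [F₁.morph s hs1 w, hs2]; exact dom_cat (hSdom₂ r hrS) w
      · show F₂.toFun (F₁.toFun (cat s w)) = cat (F₂.toFun r) w
        rw [F₁.morph s hs1 w, hs2, F₂.morph r (hSdom₂ r hrS) w]
    · rintro z ⟨x, hx, rfl⟩
      have hx' : x ∈ genIdeal dC := by rw [hdomC_gen]; exact hx
      obtain ⟨s, hs, w, rfl⟩ := hx'
      refine ⟨F₂.toFun (F₁.toFun s), ⟨F₁.toFun s, hs.2, rfl⟩, w, ?_⟩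
      show F₂.toFun (F₁.toFun (cat s w)) = cat (F₂.toFun (F₁.toFun s)) w
      rw [F₁.morph s hs.1 w, F₂.morph _ (hSdom₂ _ hs.2) w]
  have hdjoinless : JoinlessCode dC := by
    rintro u hu v hv hne ⟨z, hz⟩
    obtain ⟨y, rfl⟩ := hz.1
    have hFu : initLE (F₁.toFun u) (F₁.toFun (cat u y)) := ⟨y, F₁.morph u hu.1 y⟩
    obtain ⟨y', hy'⟩ := hz.2.1
    have hFv : initLE (F₁.toFun v) (F₁.toFun (cat u y)) := by
      rw [hy']
      exact ⟨y', F₁.morph v hv.1 y'⟩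
    have hFne : F₁.toFun u ≠ F₁.toFun v := fun h => hne (F₁.inj hu.1 hv.1 h)
    exact hSjoinless _ hu.2 _ hv.2 hFne (hasJoin_iff.2 ⟨_, hFu, hFv⟩)
  have hdmax : ∀ x : W A n, ∃ p ∈ dC, HasJoin x p := by
    intro x
    obtain ⟨d, hd, hxd⟩ := F₁.domC_max.2 x
    rw [hasJoin_iff] at hxd
    obtain ⟨z₁, hxz₁, hdz₁⟩ := hxd
    have hz₁D : z₁ ∈ F₁.Dom := by
      obtain ⟨y, rfl⟩ := hdz₁; exact dom_cat (domC_subset hd) y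
    obtain ⟨p, hp, hjp⟩ := F₂.domC_max.2 (F₁.toFun z₁)
    rw [hasJoin_iff] at hjp
    obtain ⟨w, hw1, hw2⟩ := hjp
    obtain ⟨t, rfl⟩ := hw1
    have hzD : cat z₁ t ∈ DomG := by
      refine ⟨dom_cat hz₁D t, ?_⟩
      rw [F₁.morph z₁ hz₁D t, ← F₂.domC_gen]
      obtain ⟨b, hb⟩ := hw2
      exact ⟨p, hp, b, hb⟩
    have hzg : cat z₁ t ∈ genIdeal dC := by rw [hdomC_gen]; exact hzD
    obtain ⟨s, hs, w', hw'⟩ := hzg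
    exact ⟨s, hs, hasJoin_iff.2 ⟨cat z₁ t, initLE_trans hxz₁ ⟨t, rfl⟩, ⟨w', hw'⟩⟩⟩
  have hdfin : dC.Finite := by
    have himg : F₁.toFun '' dC ⊆ S := by rintro _ ⟨x, hx, rfl⟩; exact hx.2
    exact Set.Finite.of_finite_image (hSfin.subset himg) (F₁.inj.mono fun x hx => hx.1)
  have hijoinless : JoinlessCode iC := by
    rintro _ ⟨r, hr, rfl⟩ _ ⟨r', hr', rfl⟩ hne ⟨z, hz⟩
    obtain ⟨t, ht⟩ := hz.1
    obtain ⟨t', ht'⟩ := hz.2.1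
    have h1 : z = F₂.toFun (cat r t) := by rw [F₂.morph r (hSdom₂ r hr) t]; exact ht
    have h2 : z = F₂.toFun (cat r' t') := by rw [F₂.morph r' (hSdom₂ r' hr') t']; exact ht'
    have heq : cat r t = cat r' t' :=
      F₂.inj (dom_cat (hSdom₂ r hr) t) (dom_cat (hSdom₂ r' hr') t') (h1.symm.trans h2)
    have hrne : r ≠ r' := fun h => hne (by rw [h])
    exact hSjoinless r hr r' hr' hrne (hasJoin_iff.2 ⟨cat r t, ⟨t, rfl⟩, ⟨t', heq⟩⟩)
  have himax : ∀ x : W A n, ∃ p ∈ iC, HasJoin x p := by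
    intro x
    obtain ⟨c, hc, hxc⟩ := F₂.imC_max.2 x
    rw [hasJoin_iff] at hxc
    obtain ⟨y₁, hxy₁, hcy₁⟩ := hxc
    obtain ⟨u₀, hu₀D, hu₀c⟩ := imC_mem_im hc
    obtain ⟨t, rfl⟩ := hcy₁
    have hy₁ : cat c t = F₂.toFun (cat u₀ t) := by
      rw [F₂.morph u₀ hu₀D t, hu₀c]
    obtain ⟨q, hq, hjq⟩ := F₁.imC_max.2 (cat u₀ t)
    rw [hasJoin_iff] at hjq
    obtain ⟨u₂, hu₂1, hu₂2⟩ := hjq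
    obtain ⟨t₂, rfl⟩ := hu₂1
    have hu₂Im : cat (cat u₀ t) t₂ ∈ F₁.toFun '' F₁.Dom := by
      rw [← F₁.imC_gen]
      obtain ⟨b, hb⟩ := hu₂2
      exact ⟨q, hq, b, hb⟩
    obtain ⟨sx, hsxD, hsx⟩ := hu₂Im
    have hu₂D₂ : cat (cat u₀ t) t₂ ∈ F₂.Dom := dom_cat (dom_cat hu₀D t) t₂
    have hz : F₂.toFun (cat (cat u₀ t) t₂) ∈ genIdeal iC := by
      rw [himC_gen]
      exact ⟨sx, ⟨hsxD, by rw [hsx]; exact hu₂D₂⟩, by show F₂.toFun (F₁.toFun sx) = _; rw [hsx]⟩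
    obtain ⟨e, he, w₃, hw₃⟩ := hz
    refine ⟨e, he, hasJoin_iff.2 ⟨F₂.toFun (cat (cat u₀ t) t₂), ?_, ⟨w₃, hw₃⟩⟩⟩
    have hstep : F₂.toFun (cat (cat u₀ t) t₂) = cat (cat c t) t₂ := by
      rw [F₂.morph (cat u₀ t) (dom_cat hu₀D t) t₂, ← hy₁]
    exact initLE_trans hxy₁ ⟨t₂, hstep⟩
  have hell : ell (dC ∪ iC) ≤ ellF F₂ + ellF F₁ := by
    apply ell_le
    rintro z (hz | hz)
    · obtain ⟨s, hs1, hs2, hbound⟩ := preS _ hz.2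
      have hzs : z = s := F₁.inj hz.1 hs1 hs2.symm
      intro i; rw [hzs]; exact hbound i
    · obtain ⟨r, hrS, rfl⟩ := hz
      obtain ⟨p, hp, q, hq, hr⟩ := hrS
      obtain ⟨w, hw⟩ := hr.1
      intro i
      have hF₂r : F₂.toFun r = cat (F₂.toFun p) w := by
        rw [hw, F₂.morph p (domC_subset hp) w]
      have h1 : ((F₂.toFun p) i).length ≤ ellF F₂ := ellF_bound_imC (map_domC hp) i
      have h2 : (w i).length ≤ (q i).length := by
        have hri : r i = p i ++ w i := congrFun hw i
        rcases isJoin_coord hr i with h | h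
        · have h4 := congrArg List.length (hri.symm.trans h)
          simp only [List.length_append] at h4; omega
        · have h4 := congrArg List.length (hri.symm.trans h)
          simp only [List.length_append] at h4; omega
      have h3 : (q i).length ≤ ellF F₁ := ellF_bound_imC hq i
      have h5 := congrArg (fun f => (f i).length) hF₂r
      simp only [cat, List.length_append] at h5
      omega
  refine ⟨⟨DomG, G, dC, iC, hideal, ?_, ?_, hdomC_gen, himC_gen, hdfin,
      ⟨hdjoinless, hdmax⟩, hSfin.image _, ⟨hijoinless, himax⟩⟩,
    rfl, fun x _ => rfl, rfl, rfl, hell⟩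
  · rintro x ⟨hx1, hx2⟩ w
    show F₂.toFun (F₁.toFun (cat x w)) = cat (F₂.toFun (F₁.toFun x)) w
    rw [F₁.morph x hx1 w, F₂.morph _ hx2 w]
  · rintro x ⟨hx1, hx2⟩ y ⟨hy1, hy2⟩ h
    exact F₁.inj hx1 hy1 (F₂.inj hx2 hy2 h)

end BrinThompson
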